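/- Let F ⊆ ℝ × ℝ^d be a closed set. Let t_n → t in ℝ, let x^n, x : [0,∞) → ℝ^d be continuous paths such that x^n converges to x uniformly on every compact subset of [0,∞), and let τ̄_n = inf{s ≥ 0 : (t_n+s, x^n(s)) ∉ F} and τ̄ = inf{s ≥ 0 : (t+s, x(s)) ∉ F}, taken as elements of [0,∞]. Then limsup_{n→∞} τ̄_n ≤ τ̄; that is, the first exit time from a closed set is upper semicontinuous with respect to locally uniform convergence of the initial time and the path. -/
import Mathlib


open scoped ENNReal

/-- The first exit time of the trajectory `s ↦ (t + s, x s)` from a set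
`F ⊆ ℝ × ℝ^d`, as an element of `[0,∞]` (with `inf ∅ = ∞`). -/
noncomputable def exitTime {d : ℕ} (F : Set (ℝ × (Fin d → ℝ))) (t : ℝ)
    (x : ℝ → (Fin d → ℝ)) : ℝ≥0∞ :=
  sInf (ENNReal.ofReal '' {s : ℝ | 0 ≤ s ∧ (t + s, x s) ∉ F})

/-- The first exit time from a closed set `F ⊆ ℝ × ℝ^d` is upper semicontinuous with
respect to convergence of the initial time and locally uniform convergence of the path:
if `tₙ → t` and `xₙ → x` uniformly on every compact subset of `[0,∞)`, then
`limsup τ̄ₙ ≤ τ̄`. -/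
theorem exitTime_upperSemicontinuous {d : ℕ} (F : Set (ℝ × (Fin d → ℝ)))
    (hF : IsClosed F) (t : ℝ) (tseq : ℕ → ℝ)
    (ht : Filter.Tendsto tseq Filter.atTop (nhds t))
    (x : ℝ → (Fin d → ℝ)) (xseq : ℕ → ℝ → (Fin d → ℝ))
    (hx : ContinuousOn x (Set.Ici 0)) (hxn : ∀ n, ContinuousOn (xseq n) (Set.Ici 0))
    (hconv : ∀ K : Set ℝ, K ⊆ Set.Ici 0 → IsCompact K →
      TendstoUniformlyOn xseq x Filter.atTop K) :
    Filter.limsup (fun n => exitTime F (tseq n) (xseq n)) Filter.atTop ≤ exitTime F t x := by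
  rw [exitTime]
  refine le_sInf ?_
  rintro b ⟨s, ⟨hs0, hsF⟩, rfl⟩
  have hpt : Filter.Tendsto (fun n => xseq n s) Filter.atTop (nhds (x s)) := by
    have h := hconv {s} (by simpa using hs0) isCompact_singleton
    rwa [tendstoUniformlyOn_singleton_iff_tendsto] at h
  have htend : Filter.Tendsto (fun n => (tseq n + s, xseq n s)) Filter.atTop
      (nhds (t + s, x s)) := (ht.add tendsto_const_nhds).prodMk_nhds hpt
  have hev : ∀ᶠ n in Filter.atTop, (tseq n + s, xseq n s) ∉ F :=
    htend.eventually (hF.isOpen_compl.eventually_mem hsF)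
  apply Filter.limsup_le_of_le (by isBoundedDefault)
  filter_upwards [hev] with n hn
  exact sInf_le ⟨s, ⟨hs0, hn⟩, rfl⟩
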